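/- Let α ∈ ℝ[t] be nonzero, let A ∈ ℍ[t] be nonzero and reduced with respect to i, and write A i Ā = F₁·i + F₂·j + F₃·k with F₁, F₂, F₃ ∈ ℝ[t]. Let z ∈ ℂ be a root of α (viewed in ℂ[t]) of multiplicity exactly 1. Then the following are equivalent: (a) there exist μ ∈ ℂ[t] and b₁, b₂, b₃ ∈ ℂ[t], not all divisible by (X − z), such that α·b_m′ − α′·b_m = μ·F_m for m = 1, 2, 3 (all polynomials viewed in ℂ[t]); (b) the two vectors (F₁(z), F₂(z), F₃(z)) and (F₁′(z), F₂′(z), F₃′(z)) of ℂ³ are linearly dependent over ℂ. -/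

import Mathlib

open Polynomial

noncomputable section

/-- The quaternion unit `i`. -/
def qi : Quaternion ℝ := ⟨0, 1, 0, 0⟩
/-- The quaternion unit `j`. -/
def qj : Quaternion ℝ := ⟨0, 0, 1, 0⟩
/-- The quaternion unit `k`. -/
def qk : Quaternion ℝ := ⟨0, 0, 0, 1⟩

/-- Embedding of real polynomials into quaternion polynomials (scalar coefficients). -/
def toQ : Polynomial ℝ →+* Polynomial (Quaternion ℝ) :=
  mapRingHom (algebraMap ℝ (Quaternion ℝ))

/-- Embedding of real polynomials into complex polynomials. -/
def toC : Polynomial ℝ →+* Polynomial ℂ :=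
  mapRingHom (algebraMap ℝ ℂ)

/-- Coefficientwise quaternion conjugation of a quaternion polynomial. -/
def pconj (p : Polynomial (Quaternion ℝ)) : Polynomial (Quaternion ℝ) :=
  p.sum fun n a => monomial n (star a)

/-- `A ∈ ℍ[t]` is *reduced with respect to `i`* if it has no real polynomial factor of
positive degree and no right factor of positive degree all of whose coefficients lie in the
subalgebra of `ℍ` generated by `1` and `i`. -/
def ReducedWrtI (A : Polynomial (Quaternion ℝ)) : Prop :=
  (∀ ψ : Polynomial ℝ, ∀ A' : Polynomial (Quaternion ℝ), A = toQ ψ * A' → ψ.natDegree = 0) ∧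
  (∀ A' R : Polynomial (Quaternion ℝ), A = A' * R →
    (∀ n, (R.coeff n).imJ = 0 ∧ (R.coeff n).imK = 0) → R.natDegree = 0)

def eQ : Quaternion ℝ →+* Matrix (Fin 2) (Fin 2) ℂ where
  toFun q := !![(q.re : ℂ) + q.imI * Complex.I, q.imJ + q.imK * Complex.I;
      -q.imJ + q.imK * Complex.I, q.re - q.imI * Complex.I]
  map_one' := by
    ext i j
    fin_cases i <;> fin_cases j <;> simp [Matrix.one_apply, Complex.ext_iff, Quaternion.re_one, Quaternion.imI_one, Quaternion.imJ_one, Quaternion.imK_one]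
  map_mul' a b := by
    ext i j
    fin_cases i <;> fin_cases j <;>
      simp [Matrix.mul_apply, Fin.sum_univ_two, Complex.ext_iff, Quaternion.re_mul,
        Quaternion.imI_mul, Quaternion.imJ_mul, Quaternion.imK_mul] <;>
      constructor <;> ring
  map_zero' := by
    ext i j
    fin_cases i <;> fin_cases j <;> simp [Complex.ext_iff, Quaternion.re_zero, Quaternion.imI_zero, Quaternion.imJ_zero, Quaternion.imK_zero]
  map_add' a b := by
    ext i j
    fin_cases i <;> fin_cases j <;> simp [Complex.ext_iff] <;>
      first | ring | (constructor <;> ring)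

def Phi (z : ℂ) : Polynomial (Quaternion ℝ) →+* Matrix (Fin 2) (Fin 2) ℂ :=
  eval₂RingHom' eQ (z • 1) (fun a => (Commute.one_right (eQ a)).smul_right z)

theorem Phi_apply (z : ℂ) (p : Polynomial (Quaternion ℝ)) :
    Phi z p = eval₂ eQ (z • 1) p := rfl

theorem Phi_monomial (z : ℂ) (n : ℕ) (a : Quaternion ℝ) :
    Phi z (monomial n a) = z ^ n • eQ a := by
  rw [Phi_apply, eval₂_monomial, _root_.smul_pow, one_pow, mul_smul_comm, mul_one]

theorem Phi_C (z : ℂ) (a : Quaternion ℝ) : Phi z (Polynomial.C a) = eQ a := by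
  simpa using Phi_monomial z 0 a

theorem pconj_monomial (n : ℕ) (a : Quaternion ℝ) :
    pconj (monomial n a) = monomial n (star a) := by
  unfold pconj
  rw [sum_monomial_index] ; simp

theorem pconj_add (p q : Polynomial (Quaternion ℝ)) :
    pconj (p + q) = pconj p + pconj q := by
  unfold pconj
  rw [sum_add_index] <;> simp [star_add]

set_option synthInstance.maxHeartbeats 400000 in
set_option maxHeartbeats 1000000 in
open ComplexConjugate in
theorem entry_lemmas (z : ℂ) (B : Polynomial (Quaternion ℝ)) :
    (Phi z B 1 1 = conj (Phi (conj z) B 0 0)) ∧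
    (Phi z B 1 0 = -conj (Phi (conj z) B 0 1)) ∧
    (Phi z (pconj B) 0 0 = conj (Phi (conj z) B 0 0)) ∧
    (Phi z (pconj B) 0 1 = -(Phi z B 0 1)) ∧
    (Phi z (pconj B) 1 0 = conj (Phi (conj z) B 0 1)) ∧
    (Phi z (pconj B) 1 1 = Phi z B 0 0) := by
  induction B using Polynomial.induction_on' with
  | add p q hp hq =>
    obtain ⟨h1, h2, h3, h4, h5, h6⟩ := hp
    obtain ⟨g1, g2, g3, g4, g5, g6⟩ := hq
    simp only [pconj_add, RingHom.map_add, Matrix.add_apply, h1, h2, h3, h4, h5, h6,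
      g1, g2, g3, g4, g5, g6, map_add, neg_add]
    tauto
  | monomial n a =>
    simp only [pconj_monomial, Phi_monomial, Matrix.smul_apply, smul_eq_mul, map_mul, map_pow,
      Complex.conj_conj]
    refine ⟨?_, ?_, ?_, ?_, ?_, ?_⟩ <;>
      simp [eQ, Complex.ext_iff] <;> first | (constructor <;> first | trivial | ring) | ring | trivial

theorem Phi_toQ (z : ℂ) (F : Polynomial ℝ) :
    Phi z (toQ F) = ((toC F).eval z) • 1 := by
  induction F using Polynomial.induction_on' with
  | add p q hp hq => simp only [RingHom.map_add, hp, hq, eval_add, add_smul, map_add]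
  | monomial n r =>
    have h1 : toQ (monomial n r) = monomial n (algebraMap ℝ (Quaternion ℝ) r) := by
      simp [toQ]
    have h2 : eQ (algebraMap ℝ (Quaternion ℝ) r) = (r : ℂ) • 1 := by
      ext i j
      fin_cases i <;> fin_cases j <;>
        simp [eQ, Matrix.one_apply, Quaternion.algebraMap_def, Quaternion.re_coe,
          Quaternion.imI_coe, Quaternion.imJ_coe, Quaternion.imK_coe]
    rw [h1, Phi_monomial, h2, toC]
    simp only [coe_mapRingHom, map_monomial, eval_monomial, smul_smul, Complex.coe_algebraMap]
    rw [mul_comm]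

theorem pow_rdiv (c : Quaternion ℝ) (n : ℕ) :
    ∃ B : Polynomial (Quaternion ℝ), (X : Polynomial (Quaternion ℝ)) ^ n
      = B * (X - C c) + C (c ^ n) := by
  induction n with
  | zero => exact ⟨0, by simp⟩
  | succ n ih =>
    obtain ⟨B, hB⟩ := ih
    refine ⟨X * B + C (c ^ n), ?_⟩
    have hX : (X : Polynomial (Quaternion ℝ)) * C (c ^ n) = C (c ^ n) * X := X_mul
    calc (X : Polynomial (Quaternion ℝ)) ^ (n+1) = X * X ^ n := by
          rw [pow_succ, X_mul]
    _ = X * (B * (X - C c)) + X * C (c ^ n) := by rw [hB]; noncomm_ring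
    _ = X * (B * (X - C c)) + C (c ^ n) * (X - C c) + C (c ^ n) * C c := by
          rw [hX]; noncomm_ring
    _ = (X * B + C (c ^ n)) * (X - C c) + C (c ^ (n+1)) := by
          rw [← C_mul, ← pow_succ]; noncomm_ring

theorem rdiv (c : Quaternion ℝ) (p : Polynomial (Quaternion ℝ)) :
    ∃ B r, p = B * (X - C c) + C r := by
  induction p using Polynomial.induction_on' with
  | add p q hp hq =>
    obtain ⟨B, r, hB⟩ := hp
    obtain ⟨B', r', hB'⟩ := hq
    exact ⟨B + B', r + r', by rw [hB, hB', C_add]; noncomm_ring⟩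
  | monomial n a =>
    obtain ⟨B, hB⟩ := pow_rdiv c n
    refine ⟨C a * B, a * c ^ n, ?_⟩
    rw [← C_mul_X_pow_eq_monomial, hB, C_mul]
    noncomm_ring

theorem antideriv (h : Polynomial ℂ) : ∃ q : Polynomial ℂ, derivative q = h := by
  induction h using Polynomial.induction_on' with
  | add p q hp hq =>
    obtain ⟨a, ha⟩ := hp; obtain ⟨b, hb⟩ := hq
    exact ⟨a + b, by rw [derivative_add, ha, hb]⟩
  | monomial n a =>
    refine ⟨C (a / (n+1)) * X ^ (n+1), ?_⟩
    have key : (a / ((n : ℂ)+1)) * ((n+1 : ℕ) : ℂ) = a := by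
      have hne : ((n : ℂ) + 1) ≠ 0 := Nat.cast_add_one_ne_zero n
      push_cast
      field_simp
    rw [derivative_C_mul, derivative_X_pow, ← C_mul_X_pow_eq_monomial, ← mul_assoc, ← C_mul,
      key, Nat.add_sub_cancel]

theorem eQi : eQ qi = !![Complex.I, 0; 0, -Complex.I] := by
  ext i j
  fin_cases i <;> fin_cases j <;> simp [eQ, qi]

set_option maxHeartbeats 1000000 in
set_option synthInstance.maxHeartbeats 1000000 in
open ComplexConjugate in
theorem no_common_root (A : Polynomial (Quaternion ℝ)) (hred : ReducedWrtI A)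
    (F₁ F₂ F₃ : Polynomial ℝ)
    (hF : A * Polynomial.C qi * pconj A
      = toQ F₁ * Polynomial.C qi + toQ F₂ * Polynomial.C qj + toQ F₃ * Polynomial.C qk)
    (z : ℂ) (h1 : (toC F₁).eval z = 0) (h2 : (toC F₂).eval z = 0)
    (h3 : (toC F₃).eval z = 0) : False := by
  classical
  have key : ∀ w : ℂ, Phi w A 0 0 = 0 → Phi w A 1 0 = 0 → False := by
    intro w hw0 hw1
    set qw : Quaternion ℝ := ⟨w.re, w.im, 0, 0⟩ with hqw
    obtain ⟨B, r, hBr⟩ := rdiv qw A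
    have hD : ∀ i, Phi w (X - C qw) i 0 = 0 := by
      intro i
      have hh : Phi w (X - C qw) = w • (1 : Matrix (Fin 2) (Fin 2) ℂ) - eQ qw := by
        rw [map_sub, Phi_C, Phi_apply, eval₂_X]
      rw [hh]
      fin_cases i <;>
        simp [eQ, Matrix.one_apply, hqw, Complex.ext_iff]
    have hcol : ∀ i, eQ r i 0 = 0 := by
      intro i
      have hA : Phi w A = Phi w B * Phi w (X - C qw) + eQ r := by
        rw [hBr, map_add, map_mul, Phi_C]
      have hent : Phi w A i 0 = Phi w B i 0 * Phi w (X - C qw) 0 0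
          + Phi w B i 1 * Phi w (X - C qw) 1 0 + eQ r i 0 := by
        rw [hA]; simp [Matrix.mul_apply, Fin.sum_univ_two]
      rw [hD 0, hD 1] at hent
      fin_cases i <;> simp_all
    have hr : r = 0 := by
      have ha := hcol 0
      have hb := hcol 1
      simp [eQ, Complex.ext_iff] at ha hb
      ext <;> simp_all [Quaternion.re_zero, Quaternion.imI_zero, Quaternion.imJ_zero, Quaternion.imK_zero]
    rw [hr, map_zero, add_zero] at hBr
    have hnd := hred.2 B (X - C qw) hBr (by
      intro n
      rcases n with _ | _ | n <;>
        simp [coeff_sub, coeff_X, coeff_C, Quaternion.imJ_one, Quaternion.imK_one, Quaternion.re_zero, Quaternion.imI_zero, Quaternion.imJ_zero, Quaternion.imK_zero] <;> exact ⟨rfl, rfl⟩)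
    rw [natDegree_X_sub_C] at hnd
    exact one_ne_zero hnd
  have H : Phi z A * eQ qi * Phi z (pconj A) = 0 := by
    have H0 := congrArg (Phi z) hF
    rw [map_mul, map_mul, Phi_C] at H0
    rw [map_add, map_add, map_mul, map_mul, map_mul, Phi_toQ, Phi_toQ, Phi_toQ,
      h1, h2, h3, zero_smul, zero_mul, zero_mul, zero_mul, add_zero, add_zero] at H0
    exact H0
  obtain ⟨m11, m10, p00, p01, p10, p11⟩ := entry_lemmas z A
  have m10' := (entry_lemmas (conj z) A).2.1
  rw [Complex.conj_conj] at m10'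
  set p := Phi z A 0 0 with hp
  set q := Phi z A 0 1 with hq
  set u := Phi (conj z) A 0 0 with hu
  set v := Phi (conj z) A 0 1 with hv
  have E : ∀ i j : Fin 2, (Phi z A * eQ qi * Phi z (pconj A)) i j = 0 := by
    intro i j; rw [H]; rfl
  have e01 := E 0 1
  
  have e10 := E 1 0
  have e00 := E 0 0
  simp only [Matrix.mul_apply, Fin.sum_univ_two, eQi, m10, m11, p00, p01, p10, p11,
    Matrix.cons_val', Matrix.cons_val_zero, Matrix.cons_val_one, Matrix.head_cons,
    Matrix.head_fin_const, Matrix.empty_val', Matrix.cons_val_fin_one, Matrix.of_apply] at e01 e10 e00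
  rw [← hp, ← hq] at e01 e00
  have hpq : p = 0 ∨ q = 0 := by
    have hh : p * q = 0 := by
      linear_combination (Complex.I/2) * e01 + p * q * Complex.I_mul_I
    exact mul_eq_zero.mp hh
  have huv : u = 0 ∨ v = 0 := by
    have hh : conj u * conj v = 0 := by
      linear_combination (Complex.I/2) * e10 + conj u * conj v * Complex.I_mul_I
    rcases mul_eq_zero.mp hh with h | h
    · left; simpa using congrArg conj h
    · right; simpa using congrArg conj h
  have hrel : p * conj u = q * conj v := by
    linear_combination (-Complex.I) * e00 + (p * conj u - q * conj v) * Complex.I_mul_I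
  have keyz : p = 0 → v = 0 → False := fun hp0 hv0 =>
    key z (by rw [← hp, hp0]) (by rw [m10, hv0]; simp)
  have keyzb : u = 0 → q = 0 → False := fun hu0 hq0 =>
    key (conj z) (by rw [← hu, hu0]) (by rw [m10', hq0]; simp)
  rcases hpq with hp0 | hq0 <;> rcases huv with hu0 | hv0
  · rw [hp0, hu0] at hrel
    simp only [zero_mul, map_zero] at hrel
    rcases mul_eq_zero.mp hrel.symm with h | h
    · exact keyzb hu0 h
    · exact keyz hp0 (by simpa using congrArg conj h)
  · exact keyz hp0 hv0
  · exact keyzb hu0 hq0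
  · rw [hq0, hv0] at hrel
    simp only [zero_mul, map_zero, mul_zero] at hrel
    rcases mul_eq_zero.mp hrel with h | h
    · exact keyz h hv0
    · exact keyzb (by simpa using congrArg conj h) hq0

theorem helper_constr (z c : ℂ) (α : Polynomial ℝ) (β : Polynomial ℂ) (hβ : toC α = (X - C z) * β)
    (F : Polynomial ℝ) (hc : (derivative (toC F)).eval z = c * (toC F).eval z) :
    ∃ b : Polynomial ℂ, b.eval z = β.eval z * (toC F).eval z ∧
      toC α * derivative b - derivative (toC α) * b
        = (toC α * derivative β - derivative (toC α) * β + C c * (toC α * β)) * toC F := by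
  have hdvd : (X - C z) ∣ (C c * toC F - derivative (toC F)) := by
    rw [dvd_iff_isRoot]
    simp [IsRoot, hc]
  obtain ⟨h, hgh⟩ := hdvd
  obtain ⟨Q, hQ⟩ := antideriv h
  refine ⟨β * toC F + toC α * Q, ?_, ?_⟩
  · have : (toC α).eval z = 0 := by rw [hβ]; simp
    simp [this]
  · rw [derivative_add, derivative_mul, derivative_mul, hQ]
    linear_combination (toC α * h) * hβ - (toC α * β) * hgh

set_option maxHeartbeats 1000000 in
set_option synthInstance.maxHeartbeats 400000 in
/-- Let `z ∈ ℂ` be a root of `α` of multiplicity exactly `1` and write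
`A i Ā = F₁·i + F₂·j + F₃·k`.  There exist `μ, b₁, b₂, b₃ ∈ ℂ[t]`, not all `b_m` divisible
by `X − z`, with `α·b_m′ − α′·b_m = μ·F_m` for `m = 1, 2, 3`, if and only if the vectors
`(F₁(z), F₂(z), F₃(z))` and `(F₁′(z), F₂′(z), F₃′(z))` of `ℂ³` are linearly dependent. -/
theorem rational_solution_iff_multiplicity_one (α : Polynomial ℝ) (hα : α ≠ 0)
    (A : Polynomial (Quaternion ℝ)) (hA : A ≠ 0) (hred : ReducedWrtI A)
    (F₁ F₂ F₃ : Polynomial ℝ)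
    (hF : A * Polynomial.C qi * pconj A
      = toQ F₁ * Polynomial.C qi + toQ F₂ * Polynomial.C qj + toQ F₃ * Polynomial.C qk)
    (z : ℂ) (hz : rootMultiplicity z (toC α) = 1) :
    (∃ μ b₁ b₂ b₃ : Polynomial ℂ,
      ¬((X - Polynomial.C z ∣ b₁) ∧ (X - Polynomial.C z ∣ b₂) ∧ (X - Polynomial.C z ∣ b₃)) ∧
      toC α * derivative b₁ - derivative (toC α) * b₁ = μ * toC F₁ ∧
      toC α * derivative b₂ - derivative (toC α) * b₂ = μ * toC F₂ ∧
      toC α * derivative b₃ - derivative (toC α) * b₃ = μ * toC F₃) ↔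
    ¬LinearIndependent ℂ
      ![![(toC F₁).eval z, (toC F₂).eval z, (toC F₃).eval z],
        ![(derivative (toC F₁)).eval z, (derivative (toC F₂)).eval z,
          (derivative (toC F₃)).eval z]]:= by
  classical
  have hαC : toC α ≠ 0 := by
    intro h
    rw [h, rootMultiplicity_zero] at hz
    exact zero_ne_one hz
  obtain ⟨β, hβ, hβnd⟩ := exists_eq_pow_rootMultiplicity_mul_and_not_dvd (toC α) hαC z
  rw [hz, pow_one] at hβ
  have hβz : β.eval z ≠ 0 := fun h => hβnd (dvd_iff_isRoot.mpr h)
  have hαz : (toC α).eval z = 0 := by rw [hβ]; simp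
  have hα'z : (derivative (toC α)).eval z = β.eval z := by
    rw [hβ, derivative_mul]
    simp
  have hNCR : ¬((toC F₁).eval z = 0 ∧ (toC F₂).eval z = 0 ∧ (toC F₃).eval z = 0) := by
    rintro ⟨u1, u2, u3⟩
    exact no_common_root A hred F₁ F₂ F₃ hF z u1 u2 u3
  constructor
  · rintro ⟨μ, b₁, b₂, b₃, hnd, e1, e2, e3⟩
    have Em : ∀ {b : Polynomial ℂ} {F : Polynomial ℝ},
        (toC α * derivative b - derivative (toC α) * b = μ * toC F) →
        (derivative (toC α)).eval z * b.eval z = -(μ.eval z * (toC F).eval z) := by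
      intro b F h
      have h1 := congrArg (eval z) h
      simp only [eval_sub, eval_mul, hαz, zero_mul] at h1
      linear_combination -h1
    have Dm : ∀ {b : Polynomial ℂ} {F : Polynomial ℝ},
        (toC α * derivative b - derivative (toC α) * b = μ * toC F) →
        -((derivative (derivative (toC α))).eval z * b.eval z)
          = (derivative μ).eval z * (toC F).eval z + μ.eval z * (derivative (toC F)).eval z := by
      intro b F h
      have h2 := congrArg derivative h
      simp only [derivative_sub, derivative_mul] at h2
      have h3 := congrArg (eval z) h2
      simp only [eval_add, eval_sub, eval_mul, hαz, zero_mul, mul_zero] at h3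
      linear_combination h3
    have hμz : μ.eval z ≠ 0 := by
      intro h0
      apply hnd
      have hb : ∀ {b : Polynomial ℂ} {F : Polynomial ℝ},
          (toC α * derivative b - derivative (toC α) * b = μ * toC F) →
          (X - Polynomial.C z) ∣ b := by
        intro b F h
        rw [dvd_iff_isRoot]
        have := Em h
        rw [h0, zero_mul, neg_zero, hα'z] at this
        exact (mul_eq_zero.mp this).resolve_left hβz
      exact ⟨hb e1, hb e2, hb e3⟩
    rw [Fintype.not_linearIndependent_iff]
    set α'' := (derivative (derivative (toC α))).eval z
    set α' := (derivative (toC α)).eval z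
    refine ⟨![α'' * μ.eval z - (derivative μ).eval z * α', -(μ.eval z * α')], ?_, 1, ?_⟩
    · have G1 : (α'' * μ.eval z - (derivative μ).eval z * α') * (toC F₁).eval z
          + (-(μ.eval z * α')) * (derivative (toC F₁)).eval z = 0 := by
        linear_combination α'' * Em e1 + α' * Dm e1
      have G2 : (α'' * μ.eval z - (derivative μ).eval z * α') * (toC F₂).eval z
          + (-(μ.eval z * α')) * (derivative (toC F₂)).eval z = 0 := by
        linear_combination α'' * Em e2 + α' * Dm e2
      have G3 : (α'' * μ.eval z - (derivative μ).eval z * α') * (toC F₃).eval z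
          + (-(μ.eval z * α')) * (derivative (toC F₃)).eval z = 0 := by
        linear_combination α'' * Em e3 + α' * Dm e3
      rw [Fin.sum_univ_two]
      funext m
      fin_cases m
      · simpa using G1
      · simpa using G2
      · simpa using G3
    · simp only [Matrix.cons_val_one, Matrix.head_cons, Matrix.cons_val_zero, ne_eq, neg_eq_zero]
      rw [hα'z]
      exact fun h => (mul_eq_zero.mp h).elim hμz hβz
  · intro hLI
    rw [Fintype.not_linearIndependent_iff] at hLI
    obtain ⟨g, hsum, i, hgi⟩ := hLI
    have hm : ∀ m : Fin 3,
        g 0 * ![(toC F₁).eval z, (toC F₂).eval z, (toC F₃).eval z] m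
          + g 1 * ![(derivative (toC F₁)).eval z, (derivative (toC F₂)).eval z,
              (derivative (toC F₃)).eval z] m = 0 := by
      intro m
      have := congrFun hsum m
      simpa [Fin.sum_univ_two] using this
    have hg1 : g 1 ≠ 0 := by
      intro h10
      have hg0 : g 0 ≠ 0 := by
        fin_cases i
        · exact hgi
        · exact absurd h10 hgi
      apply hNCR
      refine ⟨?_, ?_, ?_⟩
      · have := hm 0; rw [h10] at this; simp at this
        exact this.resolve_left hg0
      · have := hm 1; rw [h10] at this; simp at this
        exact this.resolve_left hg0
      · have := hm 2; rw [h10] at this; simp at this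
        exact this.resolve_left hg0
    set c := -(g 0) / g 1 with hc
    have hcm : ∀ (F : Polynomial ℝ), (g 0 * (toC F).eval z + g 1 * (derivative (toC F)).eval z = 0) →
        (derivative (toC F)).eval z = c * (toC F).eval z := by
      intro F h
      have h2 : (derivative (toC F)).eval z = (-(g 0) * (toC F).eval z) / g 1 := by
        rw [eq_div_iff hg1]; linear_combination h
      rw [h2, hc]; ring
    obtain ⟨b₁, hb1, he1⟩ := helper_constr z c α β hβ F₁ (hcm F₁ (by simpa using hm 0))
    obtain ⟨b₂, hb2, he2⟩ := helper_constr z c α β hβ F₂ (hcm F₂ (by simpa using hm 1))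
    obtain ⟨b₃, hb3, he3⟩ := helper_constr z c α β hβ F₃ (hcm F₃ (by simpa using hm 2))
    refine ⟨_, b₁, b₂, b₃, ?_, he1, he2, he3⟩
    rintro ⟨d1, d2, d3⟩
    rw [dvd_iff_isRoot] at d1 d2 d3
    apply hNCR
    refine ⟨?_, ?_, ?_⟩
    · have := d1; rw [IsRoot] at this; rw [this] at hb1
      exact ((mul_eq_zero.mp hb1.symm).resolve_left hβz)
    · have := d2; rw [IsRoot] at this; rw [this] at hb2
      exact ((mul_eq_zero.mp hb2.symm).resolve_left hβz)
    · have := d3; rw [IsRoot] at this; rw [this] at hb3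
      exact ((mul_eq_zero.mp hb3.symm).resolve_left hβz)
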